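/- For every n0, n1 ≥ 0, the partial derivative of V_S with respect to its second (current-data) argument strictly exceeds its partial derivative with respect to its first (historical-data) argument: ∂V_S/∂n1 (n0,n1) > ∂V_S/∂n0 (n0,n1). -/

import Mathlib

/-- The denominator `D(n0,n1) = σ²(n0+n1+2 n0 n1) + (1+n0)(1+n1)`. -/
noncomputable def Dden (σ n0 n1 : ℝ) : ℝ :=
  σ^2 * (n0 + n1 + 2*n0*n1) + (1+n0)*(1+n1)

/-- Forecaster value `V_L`. -/
noncomputable def VL (σ n0 n1 : ℝ) : ℝ :=
  σ^4 * (n0 + n1 + 2*n0*n1) / Dden σ n0 n1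

/-- Nowcaster value `V_S`. -/
noncomputable def VS (σ n0 n1 : ℝ) : ℝ :=
  VL σ n0 n1 + (3*σ^2*n0*n1 + 2*σ^2*n1 + n1 + n0*n1) / Dden σ n0 n1

lemma haff (a b x : ℝ) : HasDerivAt (fun x => a*x+b) a x := by
  simpa using ((hasDerivAt_id x).const_mul a).add_const b

lemma hderiv (A B C E x : ℝ) (hden : C*x+E ≠ 0) :
    deriv (fun x => (A*x+B)/(C*x+E)) x
      = (A*(C*x+E) - (A*x+B)*C)/(C*x+E)^2 :=
  ((haff A B x).div (haff C E x) hden).deriv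

lemma Dden_pos (σ n0 n1 : ℝ) (h0 : 0 ≤ n0) (h1 : 0 ≤ n1) : 0 < Dden σ n0 n1 := by
  unfold Dden
  nlinarith [sq_nonneg σ, mul_nonneg h0 h1, mul_nonneg (mul_nonneg (sq_nonneg σ) h0) h1,
    mul_nonneg (sq_nonneg σ) h0, mul_nonneg (sq_nonneg σ) h1]

/-- `∂V_S/∂n1 (n0,n1) > ∂V_S/∂n0 (n0,n1)` for all `n0, n1 ≥ 0`. -/
theorem stmt6 (σ : ℝ) (hσ : 0 < σ) (n0 n1 : ℝ) (h0 : 0 ≤ n0) (h1 : 0 ≤ n1) :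
    deriv (fun x => VS σ x n1) n0 < deriv (fun y => VS σ n0 y) n1 := by
  have hD : 0 < Dden σ n0 n1 := Dden_pos σ n0 n1 h0 h1
  set A0 : ℝ := σ^4*(1+2*n1) + 3*σ^2*n1 + n1 with hA0
  set B0 : ℝ := σ^4*n1 + 2*σ^2*n1 + n1 with hB0
  set C0 : ℝ := σ^2*(1+2*n1) + (1+n1) with hC0
  set E0 : ℝ := σ^2*n1 + (1+n1) with hE0
  set A1 : ℝ := σ^4*(1+2*n0) + 3*σ^2*n0 + 2*σ^2 + 1 + n0 with hA1
  set B1 : ℝ := σ^4*n0 with hB1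
  set C1 : ℝ := σ^2*(1+2*n0) + (1+n0) with hC1
  set E1 : ℝ := σ^2*n0 + (1+n0) with hE1
  have hd0 : C0*n0+E0 = Dden σ n0 n1 := by rw [hC0, hE0]; unfold Dden; ring
  have hd1 : C1*n1+E1 = Dden σ n0 n1 := by rw [hC1, hE1]; unfold Dden; ring
  have hf0 : (fun x => VS σ x n1) = fun x => (A0*x+B0)/(C0*x+E0) := by
    funext x
    rw [VS, VL, Dden, ← add_div, hA0, hB0, hC0, hE0]
    ring_nf
  have hf1 : (fun y => VS σ n0 y) = fun y => (A1*y+B1)/(C1*y+E1) := by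
    funext y
    rw [VS, VL, Dden, ← add_div, hA1, hB1, hC1, hE1]
    ring_nf
  rw [hf0, hf1, hderiv A0 B0 C0 E0 n0 (by rw [hd0]; exact hD.ne'),
    hderiv A1 B1 C1 E1 n1 (by rw [hd1]; exact hD.ne'), hd0, hd1,
    div_lt_div_iff_of_pos_right (by positivity)]
  rw [hd0] at *
  rw [hd1] at *
  simp only [hA0, hB0, hC0, hE0, hA1, hB1, hC1, hE1]
  unfold Dden
  nlinarith [sq_nonneg σ, pow_pos hσ 2, pow_pos hσ 4, mul_nonneg h0 h1, sq_nonneg n0,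
    mul_nonneg (pow_pos hσ 2).le h0, mul_nonneg (pow_pos hσ 2).le (sq_nonneg n0),
    mul_nonneg (pow_pos hσ 4).le h0, mul_nonneg (pow_pos hσ 4).le (sq_nonneg n0)]
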